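/- Let ∑_n x_n be an absolutely convergent series in a Banach space X, and let E(x_n) := {∑_{n∈A} x_n : A ⊆ ℕ} be its achievement set. Suppose that for some k ∈ ℕ and j ∈ ℕ one has x_k = x_{k+1} = … = x_{k+2j−2}. Then j·x_k ∈ S(E(x_n)). -/

import Mathlib

/-- The spectre of a set `A` in an abelian group. -/
def spectre {X : Type*} [AddCommGroup X] (A : Set X) : Set X :=
  {z | ∀ x ∈ A, x + z ∈ A ∨ x - z ∈ A}

/-- The achievement set of a series: the set of all its subsums. -/
def achievementSet {X : Type*} [AddCommGroup X] [TopologicalSpace X] (x : ℕ → X) : Set X :=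
  {y | ∃ A : Set ℕ, y = ∑' n : A, x n}

theorem nsmul_mem_spectre_achievementSet {X : Type*} [NormedAddCommGroup X]
    [NormedSpace ℝ X] [CompleteSpace X]
    (x : ℕ → X) (hx : Summable fun n => ‖x n‖)
    (k j : ℕ) (hj : 1 ≤ j)
    (hconst : ∀ i, k ≤ i → i ≤ k + 2 * j - 2 → x i = x k) :
    j • x k ∈ spectre (achievementSet x) := by
  classical
  intro y hy
  obtain ⟨A, rfl⟩ := hy
  have hsum : Summable x := hx.of_norm
  set I : Finset ℕ := Finset.Icc k (k + 2 * j - 2) with hI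
  have hIcard : I.card = 2 * j - 1 := by
    rw [hI, Nat.card_Icc]; omega
  have hIconst : ∀ i ∈ I, x i = x k := by
    intro i hi
    rw [hI, Finset.mem_Icc] at hi
    exact hconst i hi.1 hi.2
  by_cases hc : j ≤ (I.filter (· ∈ A)).card
  · -- remove j elements of A inside the block
    obtain ⟨S, hSsub, hScard⟩ := Finset.exists_subset_card_eq hc
    have hSA : (↑S : Set ℕ) ⊆ A := fun i hi => (Finset.mem_filter.mp (hSsub hi)).2
    have hSI : S ⊆ I := hSsub.trans (Finset.filter_subset _ _)
    right
    refine ⟨A \ ↑S, ?_⟩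
    have hdisj : Disjoint (A \ ↑S) (↑S : Set ℕ) := Set.disjoint_sdiff_left
    have hunion : (A \ ↑S) ∪ ↑S = A := Set.diff_union_of_subset hSA
    have h1 : ∑' n : A, x n = (∑' n : (A \ ↑S : Set ℕ), x n) + ∑' n : (↑S : Set ℕ), x n := by
      rw [← Summable.tsum_union_disjoint hdisj (hsum.subtype _) (hsum.subtype _), hunion]
    have h2 : ∑' n : (↑S : Set ℕ), x n = j • x k := by
      rw [S.tsum_subtype', Finset.sum_congr rfl (fun i hi => hIconst i (hSI hi)),
        Finset.sum_const, hScard]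
    rw [h1, h2]; abel
  · -- add j unused elements of the block
    push_neg at hc
    have hcard2 : j ≤ (I.filter (fun i => ¬ i ∈ A)).card := by
      have := Finset.card_filter_add_card_filter_not (s := I) (p := (· ∈ A))
      omega
    obtain ⟨S, hSsub, hScard⟩ := Finset.exists_subset_card_eq hcard2
    have hSA : Disjoint A (↑S : Set ℕ) := by
      rw [Set.disjoint_right]
      intro i hi
      exact (Finset.mem_filter.mp (hSsub hi)).2
    have hSI : S ⊆ I := hSsub.trans (Finset.filter_subset _ _)
    left
    refine ⟨A ∪ ↑S, ?_⟩
    rw [Summable.tsum_union_disjoint hSA (hsum.subtype _) (hsum.subtype _)]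
    congr 1
    rw [S.tsum_subtype', Finset.sum_congr rfl (fun i hi => hIconst i (hSI hi)),
      Finset.sum_const, hScard]
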